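/- For the biased assimilation model with $b_i = 1$ on the undirected star graph with unit edge weights, the nonnegative Jacobian $P_k$ at an equilibrium $x^* = [1/2, a_2, \dots, a_N]^T$ with $a_i \in (0,1)$ for $2 \le i \le k$ ($k \ge 2$) and $\sum_{i=2}^N a_i = (N-1)/2$ has leading principal $k \times k$ submatrix with diagonal entries $1$, first-row off-diagonal entries $1/(2w_{11}+N-1)$, and first-column entries $4a_i(1-a_i)/(2w_{ii}+1)$, whose spectral radius is strictly greater than $1$; hence the equilibrium is unstable. -/

import Mathlib

open Finset Filter Topology

/-- Weighted sum of neighbors' opinions: `s_i = ∑_{j ∈ N_i} w_{ij} x_j`. -/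
noncomputable def wsum {N : ℕ} (w : Fin N → Fin N → ℝ) (Nbr : Fin N → Finset (Fin N))
    (x : Fin N → ℝ) (i : Fin N) : ℝ :=
  ∑ j ∈ Nbr i, w i j * x j

/-- Weighted degree `d_i = ∑_{j ∈ N_i} w_{ij}`. -/
noncomputable def degw {N : ℕ} (w : Fin N → Fin N → ℝ) (Nbr : Fin N → Finset (Fin N))
    (i : Fin N) : ℝ :=
  ∑ j ∈ Nbr i, w i j

/-- Biased assimilation update map (componentwise). Powers are real powers. -/
noncomputable def F {N : ℕ} (w : Fin N → Fin N → ℝ) (Nbr : Fin N → Finset (Fin N))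
    (b : Fin N → ℝ) (x : Fin N → ℝ) (i : Fin N) : ℝ :=
  (w i i * x i + x i ^ b i * wsum w Nbr x i) /
    (w i i + x i ^ b i * wsum w Nbr x i + (1 - x i) ^ b i * (degw w Nbr i - wsum w Nbr x i))

/-- The directed influence graph (edge `j → i` iff `j ∈ Nbr i`) is strongly connected. -/
def StronglyConnected {N : ℕ} (Nbr : Fin N → Finset (Fin N)) : Prop :=
  ∀ i j : Fin N, Relation.TransGen (fun a c => a ∈ Nbr c) i j

/-- Lyapunov stability of a fixed point of the discrete-time system `x⁺ = G x`. -/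
def LyapStable {E : Type*} [NormedAddCommGroup E] (G : E → E) (q : E) : Prop :=
  ∀ ε > 0, ∃ δ > 0, ∀ x, ‖x - q‖ < δ → ∀ k : ℕ, ‖G^[k] x - q‖ < ε

/-- Local exponential stability of a fixed point of `x⁺ = G x`. -/
def LocExpStable {E : Type*} [NormedAddCommGroup E] (G : E → E) (q : E) : Prop :=
  ∃ δ > 0, ∃ C > 0, ∃ r, 0 ≤ r ∧ r < 1 ∧
    ∀ x, ‖x - q‖ ≤ δ → ∀ k : ℕ, ‖G^[k] x - q‖ ≤ C * r ^ k * ‖x - q‖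

/-- Spectral radius of a real square matrix: supremum of moduli of its complex eigenvalues. -/
noncomputable def specRad {n : ℕ} (M : Matrix (Fin n) (Fin n) ℝ) : ℝ :=
  sSup {r : ℝ | ∃ μ : ℂ, (M.map (fun a => (a : ℂ))).charpoly.IsRoot μ ∧ r = ‖μ‖}

/-! ### Auxiliary lemmas -/

lemma aux_eval_charpoly {n : ℕ} (M : Matrix (Fin n) (Fin n) ℂ) (μ : ℂ) :
    M.charpoly.eval μ = (μ • (1 : Matrix (Fin n) (Fin n) ℂ) - M).det := by
  rw [Matrix.charpoly, ← Polynomial.coe_evalRingHom, RingHom.map_det]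
  congr 1
  ext i j
  by_cases h : i = j
  · subst h
    simp [Matrix.charmatrix_apply_eq, Matrix.one_apply_eq]
  · simp [Matrix.charmatrix_apply_ne _ _ _ h, Matrix.one_apply_ne h]

lemma aux_one_lt_specRad {n : ℕ} (M : Matrix (Fin n) (Fin n) ℝ) (μ : ℂ) (v : Fin n → ℂ)
    (hv : v ≠ 0) (heig : (M.map (fun a => (a : ℂ))).mulVec v = μ • v)
    (hμ : 1 < ‖μ‖) :
    1 < specRad M := by
  unfold specRad
  set Mc := M.map (fun a => (a : ℂ)) with hMc
  have hroot : Mc.charpoly.IsRoot μ := by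
    have hdet : (μ • (1 : Matrix (Fin n) (Fin n) ℂ) - Mc).det = 0 := by
      rw [← Matrix.exists_mulVec_eq_zero_iff]
      refine ⟨v, hv, ?_⟩
      rw [Matrix.sub_mulVec, Matrix.smul_mulVec, Matrix.one_mulVec, heig, sub_self]
    simpa [Polynomial.IsRoot, aux_eval_charpoly] using hdet
  have hne : Mc.charpoly ≠ 0 := (Matrix.charpoly_monic Mc).ne_zero
  have hfin : {z : ℂ | Mc.charpoly.IsRoot z}.Finite := Polynomial.finite_setOf_isRoot hne
  have hbdd : BddAbove {r : ℝ | ∃ z : ℂ, Mc.charpoly.IsRoot z ∧ r = ‖z‖} := by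
    have heq : {r : ℝ | ∃ z : ℂ, Mc.charpoly.IsRoot z ∧ r = ‖z‖}
        = (‖·‖) '' {z : ℂ | Mc.charpoly.IsRoot z} := by
      ext r
      simp only [Set.mem_setOf_eq, Set.mem_image]
      constructor
      · rintro ⟨z, hz, rfl⟩; exact ⟨z, hz, rfl⟩
      · rintro ⟨z, hz, rfl⟩; exact ⟨z, hz, rfl⟩
    rw [heq]
    exact (hfin.image _).bddAbove
  exact lt_csSup_of_lt hbdd ⟨μ, hroot, rfl⟩ hμ

lemma aux_leaf_fderiv {N : ℕ} (Wi A : ℝ) (i c : Fin N) (hic : i ≠ c) (x : Fin N → ℝ)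
    (hxc : x c = 1/2) (hxi : x i = A) (hW : 0 ≤ Wi) (m : Fin N) :
    fderiv ℝ (fun y : Fin N → ℝ =>
        (Wi * y i + y i * y c) / (Wi + y i * y c + (1 - y i) * (1 - y c))) x
      (Pi.single m 1)
      = if m = i then 1 else if m = c then 4 * A * (1 - A) / (2 * Wi + 1) else 0 := by
  have hDpos : (0:ℝ) < Wi + 1/2 := by linarith
  have hi := hasFDerivAt_apply (𝕜 := ℝ) (F' := fun _ : Fin N => ℝ) i x
  have hc := hasFDerivAt_apply (𝕜 := ℝ) (F' := fun _ : Fin N => ℝ) c x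
  have hnum := (hi.const_mul Wi).fun_add (hi.fun_mul hc)
  have hden := ((hi.fun_mul hc).const_add Wi).fun_add
      (((hasFDerivAt_const (1:ℝ) x).fun_sub hi).fun_mul ((hasFDerivAt_const (1:ℝ) x).fun_sub hc))
  have hden0 : Wi + x i * x c + (1 - x i) * (1 - x c) ≠ 0 := by
    rw [hxc, hxi]; nlinarith
  have hinv := HasDerivAt.comp_hasFDerivAt (𝕜 := ℝ) x (hasDerivAt_inv hden0) hden
  have hf := hnum.fun_mul hinv
  simp only [Function.comp_def] at hf
  rw [show (fun y : Fin N → ℝ =>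
        (Wi * y i + y i * y c) / (Wi + y i * y c + (1 - y i) * (1 - y c)))
      = (fun y : Fin N → ℝ =>
        (Wi * y i + y i * y c) * (Wi + y i * y c + (1 - y i) * (1 - y c))⁻¹) from
    funext fun y => div_eq_mul_inv _ _, hf.fderiv]
  simp only [ContinuousLinearMap.smul_apply, ContinuousLinearMap.sub_apply,
    ContinuousLinearMap.add_apply, ContinuousLinearMap.zero_apply,
    ContinuousLinearMap.proj_apply, Pi.single_apply, smul_eq_mul, hxc, hxi]
  have hd2 : Wi + A * (1/2) + (1 - A) * (1 - 1/2) = Wi + 1/2 := by ring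
  by_cases hmi : m = i
  · subst hmi
    rw [if_pos rfl, if_pos rfl, if_neg (Ne.symm hic)]
    rw [hd2]
    norm_num
    field_simp
  · by_cases hmc : m = c
    · subst hmc
      rw [if_pos rfl, if_neg (fun h : i = m => hic h), if_neg (fun h : m = i => hmi h)]
      rw [hd2]
      norm_num
      have h1 : (Wi + 1/2 : ℝ) ≠ 0 := by positivity
      have h2 : (2 * Wi + 1 : ℝ) ≠ 0 := by positivity
      field_simp
      ring
    · rw [if_neg (fun h : i = m => hmi h.symm), if_neg (fun h : c = m => hmc h.symm),
        if_neg hmi, if_neg hmc]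
      ring

lemma aux_center_fderiv {N : ℕ} (Wc D0 : ℝ) (c : Fin N) (x : Fin N → ℝ)
    (hxc : x c = 1/2) (hS : ∑ j ∈ Finset.univ.erase c, x j = D0 / 2)
    (hW : 0 ≤ Wc) (hD0 : 1 ≤ D0) (m : Fin N) :
    fderiv ℝ (fun y : Fin N → ℝ =>
        (Wc * y c + y c * ∑ j ∈ Finset.univ.erase c, y j) /
          (Wc + y c * ∑ j ∈ Finset.univ.erase c, y j +
            (1 - y c) * (D0 - ∑ j ∈ Finset.univ.erase c, y j))) x
      (Pi.single m 1)
      = if m = c then 1 else 1 / (2 * Wc + D0) := by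
  have hc := hasFDerivAt_apply (𝕜 := ℝ) (F' := fun _ : Fin N => ℝ) c x
  have hS' := HasFDerivAt.fun_sum (u := Finset.univ.erase c)
    (fun j _ => hasFDerivAt_apply (𝕜 := ℝ) (F' := fun _ : Fin N => ℝ) j x)
  have hnum := (hc.const_mul Wc).fun_add (hc.fun_mul hS')
  have hden := ((hc.fun_mul hS').const_add Wc).fun_add
      (((hasFDerivAt_const (1:ℝ) x).fun_sub hc).fun_mul ((hasFDerivAt_const D0 x).fun_sub hS'))
  have hden0 : Wc + x c * ∑ j ∈ Finset.univ.erase c, x j +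
      (1 - x c) * (D0 - ∑ j ∈ Finset.univ.erase c, x j) ≠ 0 := by
    rw [hxc, hS]; nlinarith
  have hinv := HasDerivAt.comp_hasFDerivAt (𝕜 := ℝ) x (hasDerivAt_inv hden0) hden
  have hf := hnum.fun_mul hinv
  simp only [Function.comp_def] at hf
  rw [show (fun y : Fin N → ℝ =>
        (Wc * y c + y c * ∑ j ∈ Finset.univ.erase c, y j) /
          (Wc + y c * ∑ j ∈ Finset.univ.erase c, y j +
            (1 - y c) * (D0 - ∑ j ∈ Finset.univ.erase c, y j)))
      = (fun y : Fin N → ℝ =>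
        (Wc * y c + y c * ∑ j ∈ Finset.univ.erase c, y j) *
          (Wc + y c * ∑ j ∈ Finset.univ.erase c, y j +
            (1 - y c) * (D0 - ∑ j ∈ Finset.univ.erase c, y j))⁻¹) from
    funext fun y => div_eq_mul_inv _ _, hf.fderiv]
  simp only [ContinuousLinearMap.smul_apply, ContinuousLinearMap.sub_apply,
    ContinuousLinearMap.add_apply, ContinuousLinearMap.zero_apply,
    ContinuousLinearMap.sum_apply, ContinuousLinearMap.proj_apply,
    Pi.single_apply, smul_eq_mul, hxc, hS]
  rw [Finset.sum_ite_eq' (Finset.univ.erase c) m (fun _ => (1:ℝ))]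
  simp only [Finset.mem_erase, Finset.mem_univ, and_true]
  have hd2 : (0:ℝ) < Wc + D0/2 := by linarith
  by_cases hmc : m = c
  · subst hmc
    rw [if_pos rfl, if_pos rfl, if_neg (by simp)]
    have h1 : (Wc + 1/2 * (D0/2) + (1 - 1/2) * (D0 - D0/2) : ℝ) = Wc + D0/2 := by ring
    rw [h1]
    norm_num
    field_simp
    ring
  · rw [if_neg (fun h : c = m => hmc h.symm), if_pos hmc, if_neg hmc]
    have h1 : (Wc + 1/2 * (D0/2) + (1 - 1/2) * (D0 - D0/2) : ℝ) = Wc + D0/2 := by ring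
    rw [h1]
    norm_num
    have h2 : (Wc + D0/2 : ℝ) ≠ 0 := by positivity
    have h3 : (2 * Wc + D0 : ℝ) ≠ 0 := by linarith
    field_simp

lemma aux_F_leaf {N : ℕ} (w : Fin N → Fin N → ℝ) (Nbr : Fin N → Finset (Fin N))
    (b : Fin N → ℝ) (c i : Fin N) (hNbrL : Nbr i = {c})
    (hwic : w i c = 1) (hbi : b i = 1) (y : Fin N → ℝ) :
    F w Nbr b y i = (w i i * y i + y i * y c) /
      (w i i + y i * y c + (1 - y i) * (1 - y c)) := by
  unfold F wsum degw
  rw [hNbrL]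
  simp [hwic, hbi, Real.rpow_one]

lemma aux_F_center {N : ℕ} (w : Fin N → Fin N → ℝ) (Nbr : Fin N → Finset (Fin N))
    (b : Fin N → ℝ) (c : Fin N) (hNbrC : Nbr c = Finset.univ.erase c)
    (hw : ∀ j, j ≠ c → w c j = 1) (hbc : b c = 1) (D0 : ℝ)
    (hD0 : ((Finset.univ.erase c).card : ℝ) = D0) (y : Fin N → ℝ) :
    F w Nbr b y c = (w c c * y c + y c * ∑ j ∈ Finset.univ.erase c, y j) /
      (w c c + y c * ∑ j ∈ Finset.univ.erase c, y j +
        (1 - y c) * (D0 - ∑ j ∈ Finset.univ.erase c, y j)) := by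
  unfold F wsum degw
  rw [hNbrC]
  have h1 : ∑ j ∈ Finset.univ.erase c, w c j * y j = ∑ j ∈ Finset.univ.erase c, y j := by
    refine Finset.sum_congr rfl fun j hj => ?_
    rw [hw j (Finset.mem_erase.1 hj).1, one_mul]
  have h2 : ∑ j ∈ Finset.univ.erase c, w c j = D0 := by
    rw [← hD0, Finset.card_eq_sum_ones]
    push_cast
    refine Finset.sum_congr rfl fun j hj => ?_
    rw [hw j (Finset.mem_erase.1 hj).1]
  rw [h1, h2, hbc, Real.rpow_one, Real.rpow_one]

set_option maxHeartbeats 2000000 in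
lemma aux_unstable {N k : ℕ} (hk : 2 ≤ k) (hkN : k ≤ N)
    (c : Fin N) (hc : c.val = 0)
    (Nbr : Fin N → Finset (Fin N))
    (hNbrC : Nbr c = Finset.univ.erase c) (hNbrL : ∀ i, i ≠ c → Nbr i = {c})
    (w : Fin N → Fin N → ℝ) (hw : ∀ i j, i ≠ j → w i j = 1) (hwii : ∀ i, 0 ≤ w i i)
    (b : Fin N → ℝ) (hb : ∀ i, b i = 1)
    (x : Fin N → ℝ) (hxc : x c = 1/2)
    (hmid : ∀ i : Fin N, i ≠ c → i.val < k → x i ∈ Set.Ioo (0 : ℝ) 1)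
    (hext : ∀ i : Fin N, k ≤ i.val → x i = 0 ∨ x i = 1)
    (hsum : ∑ i ∈ Finset.univ.erase c, x i = ((N : ℝ) - 1) / 2) :
    ¬ LyapStable (F w Nbr b) x := by
  intro hL
  have hN2 : 2 ≤ N := le_trans hk hkN
  have hNr : (2:ℝ) ≤ (N:ℝ) := by exact_mod_cast hN2
  have hi1N : 1 < N := by omega
  set i1 : Fin N := ⟨1, hi1N⟩ with hi1
  have hi1c : i1 ≠ c := by
    intro h
    have : i1.val = c.val := congrArg Fin.val h
    rw [hc] at this
    simp [hi1] at this
  have ha := hmid i1 hi1c (by simp [hi1]; omega)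
  set a : ℝ := x i1 with haa
  have ha0 : 0 < a := ha.1
  have ha1 : a < 1 := ha.2
  have hx01 : ∀ j, j ≠ c → 0 ≤ x j ∧ x j ≤ 1 := by
    intro j hj
    by_cases hjk : j.val < k
    · have := hmid j hj hjk
      exact ⟨le_of_lt this.1, le_of_lt this.2⟩
    · rcases hext j (by omega) with h | h <;> rw [h] <;> norm_num
  have hD0 : ((Finset.univ.erase c).card : ℝ) = (N:ℝ) - 1 := by
    rw [Finset.card_erase_of_mem (Finset.mem_univ c)]
    simp
    push_cast [Nat.cast_sub (by omega : 1 ≤ N)]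
    ring
  set ε : ℝ := (1 - a)/2 with hε
  have hεpos : 0 < ε := by rw [hε]; linarith
  obtain ⟨δ, hδpos, hδ⟩ := hL ε hεpos
  set h : ℝ := min (δ/2) (1/4) with hh
  have hhpos : 0 < h := by
    apply lt_min (by linarith) (by norm_num)
  have hh4 : h ≤ 1/4 := min_le_right _ _
  set x₀ : Fin N → ℝ := Function.update x c (1/2 + h) with hx₀
  have hnear : ‖x₀ - x‖ < δ := by
    rw [pi_norm_lt_iff hδpos]
    intro j
    by_cases hjc : j = c
    · subst hjc
      simp [hx₀, Function.update_self, hxc, Real.norm_eq_abs]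
      rw [abs_of_nonneg (le_of_lt hhpos)]
      calc h ≤ δ/2 := min_le_left _ _
        _ < δ := by linarith
    · simp [hx₀, Function.update_of_ne hjc, Real.norm_eq_abs, hδpos]
  have hsafe : ∀ t : ℕ, ‖(F w Nbr b)^[t] x₀ - x‖ < ε := fun t => hδ x₀ hnear t
  set P : (Fin N → ℝ) → Prop :=
    fun y => (∀ j, j ≠ c → x j ≤ y j ∧ y j ≤ 1) ∧ (1/2 + h ≤ y c ∧ y c ≤ 1) with hP
  have hstep : ∀ y, P y → P (F w Nbr b y) ∧ ∀ j, y j ≤ F w Nbr b y j := by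
    intro y hy
    have hyl := hy.1
    have hycl := hy.2.1
    have hycu := hy.2.2
    have hyc2 : (1:ℝ)/2 ≤ y c := by linarith
    set S : ℝ := ∑ j ∈ Finset.univ.erase c, y j with hS
    have hS_lb : ((N:ℝ) - 1)/2 ≤ S := by
      rw [← hsum]
      exact Finset.sum_le_sum fun j hj => (hyl j (Finset.mem_erase.1 hj).1).1
    have hS_ub : S ≤ (N:ℝ) - 1 := by
      calc S ≤ ∑ j ∈ Finset.univ.erase c, 1 :=
            Finset.sum_le_sum fun j hj => (hyl j (Finset.mem_erase.1 hj).1).2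
        _ = ((Finset.univ.erase c).card : ℝ) := by rw [Finset.sum_const]; simp
        _ = (N:ℝ) - 1 := hD0
    have hS_pos : (1:ℝ)/2 ≤ S := le_trans (by linarith) hS_lb
    have hFc := aux_F_center w Nbr b c hNbrC (fun j hj => hw c j (fun e => hj e.symm))
      (hb c) ((N:ℝ)-1) hD0 y
    have hwc := hwii c
    have ht1 : (0:ℝ) ≤ (1 - y c) * (((N:ℝ)-1) - S) :=
      mul_nonneg (by linarith) (by linarith)
    have ht2 : (1:ℝ)/4 ≤ y c * S := by nlinarith
    have hdenC : (0:ℝ) < w c c + y c * S + (1 - y c) * (((N:ℝ)-1) - S) := by linarith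
    have hFc_ge : y c ≤ F w Nbr b y c := by
      rw [hFc, ← hS, le_div_iff₀ hdenC]
      nlinarith [mul_nonneg (mul_nonneg (by linarith : (0:ℝ) ≤ y c)
        (by linarith : (0:ℝ) ≤ 1 - y c)) (by linarith : (0:ℝ) ≤ 2*S - ((N:ℝ)-1))]
    have hFc_le : F w Nbr b y c ≤ 1 := by
      rw [hFc, ← hS, div_le_one hdenC]
      nlinarith [mul_nonneg (by linarith : (0:ℝ) ≤ w c c) (by linarith : (0:ℝ) ≤ 1 - y c)]
    have hleaf : ∀ j, j ≠ c → y j ≤ F w Nbr b y j ∧ F w Nbr b y j ≤ 1 := by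
      intro j hjc
      have hFj := aux_F_leaf w Nbr b c j (hNbrL j hjc) (hw j c hjc) (hb j) y
      have hyj0 : 0 ≤ y j := le_trans (hx01 j hjc).1 (hyl j hjc).1
      have hyj1 : y j ≤ 1 := (hyl j hjc).2
      have hwj := hwii j
      rcases eq_or_lt_of_le hyj0 with hyj | hyj
      · rw [hFj, ← hyj]
        norm_num
      · have hdenj : (0:ℝ) < w j j + y j * y c + (1 - y j) * (1 - y c) := by
          nlinarith
        constructor
        · rw [hFj, le_div_iff₀ hdenj]
          nlinarith [mul_nonneg (mul_nonneg (by linarith : (0:ℝ) ≤ y j)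
            (by linarith : (0:ℝ) ≤ 1 - y j)) (by linarith : (0:ℝ) ≤ 2*y c - 1)]
        · rw [hFj, div_le_one hdenj]
          nlinarith [mul_nonneg (by linarith : (0:ℝ) ≤ w j j) (by linarith : (0:ℝ) ≤ 1 - y j),
            mul_nonneg (by linarith : (0:ℝ) ≤ 1 - y j) (by linarith : (0:ℝ) ≤ 1 - y c)]
    refine ⟨⟨fun j hjc => ⟨le_trans (hyl j hjc).1 (hleaf j hjc).1, (hleaf j hjc).2⟩,
        le_trans hycl hFc_ge, hFc_le⟩, fun j => ?_⟩
    by_cases hjc : j = c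
    · subst hjc; exact hFc_ge
    · exact (hleaf j hjc).1
  have hPiter : ∀ t : ℕ, P ((F w Nbr b)^[t] x₀) := by
    intro t
    induction t with
    | zero =>
      refine ⟨fun j hjc => ?_, ?_, ?_⟩
      · rw [Function.iterate_zero_apply, hx₀, Function.update_of_ne hjc]
        exact ⟨le_refl _, (hx01 j hjc).2⟩
      · rw [Function.iterate_zero_apply, hx₀, Function.update_self]
      · rw [Function.iterate_zero_apply, hx₀, Function.update_self]; linarith
    | succ t ih =>
      rw [Function.iterate_succ_apply']
      exact (hstep _ ih).1
  set a' : ℝ := (1 + a)/2 with ha'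
  set γ : ℝ := 2*h*a*(1 - a')/(w i1 i1 + 1) with hγ
  have hwi1 := hwii i1
  have ha'1 : a' < 1 := by rw [ha']; linarith
  have ha'a : a < a' := by rw [ha']; linarith
  have hγpos : 0 < γ := by
    rw [hγ]
    have : 0 < 1 - a' := by linarith
    positivity
  have hstep2 : ∀ y, P y → y i1 ≤ a' → y i1 + γ ≤ F w Nbr b y i1 := by
    intro y hy hya'
    have hyl := hy.1
    have hycl := hy.2.1
    have hycu := hy.2.2
    have hFj := aux_F_leaf w Nbr b c i1 (hNbrL i1 hi1c) (hw i1 c hi1c) (hb i1) y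
    have hyj0 : a ≤ y i1 := (hyl i1 hi1c).1
    have hdenj : (0:ℝ) < w i1 i1 + y i1 * y c + (1 - y i1) * (1 - y c) := by
      nlinarith
    have hdenj1 : w i1 i1 + y i1 * y c + (1 - y i1) * (1 - y c) ≤ w i1 i1 + 1 := by
      nlinarith
    rw [hFj, le_div_iff₀ hdenj]
    have hkey : 2*h*a*(1 - a') ≤ y i1 * (1 - y i1) * (2 * y c - 1) := by
      have f1 : (0:ℝ) ≤ 1 - a' := by linarith
      have f2 : (0:ℝ) ≤ 2*h := by linarith
      calc 2*h*a*(1 - a') = a * (1 - a') * (2*h) := by ring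
        _ ≤ y i1 * (1 - y i1) * (2 * y c - 1) := by
          apply mul_le_mul
          · apply mul_le_mul hyj0 (by linarith) f1 (by linarith)
          · linarith
          · linarith
          · nlinarith
    have hγden : γ * (w i1 i1 + y i1 * y c + (1 - y i1) * (1 - y c)) ≤ 2*h*a*(1 - a') := by
      have : γ * (w i1 i1 + 1) = 2*h*a*(1 - a') := by
        rw [hγ]; field_simp
      nlinarith
    nlinarith
  have hu0 : ((F w Nbr b)^[0] x₀) i1 = a := by
    rw [Function.iterate_zero_apply, hx₀, Function.update_of_ne hi1c]
  have hescape : ∃ t : ℕ, a' < ((F w Nbr b)^[t] x₀) i1 := by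
    by_contra hcon
    push_neg at hcon
    have hlin : ∀ t : ℕ, a + t * γ ≤ ((F w Nbr b)^[t] x₀) i1 := by
      intro t
      induction t with
      | zero => simp [hu0]
      | succ t ih =>
        rw [Function.iterate_succ_apply']
        push_cast
        calc a + (t+1) * γ = (a + t * γ) + γ := by ring
          _ ≤ ((F w Nbr b)^[t] x₀) i1 + γ := by linarith
          _ ≤ F w Nbr b ((F w Nbr b)^[t] x₀) i1 := hstep2 _ (hPiter t) (hcon t)
    obtain ⟨n, hn⟩ := exists_nat_gt ((a' - a)/γ)
    have h2 : a' - a < n * γ := by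
      rw [div_lt_iff₀ hγpos] at hn
      linarith
    have h3 := hlin n
    have h4 := hcon n
    linarith
  obtain ⟨t, ht⟩ := hescape
  have hcontra := hsafe t
  have hbig : ε < ‖(F w Nbr b)^[t] x₀ - x‖ := by
    have h1 : |((F w Nbr b)^[t] x₀ - x) i1| ≤ ‖(F w Nbr b)^[t] x₀ - x‖ := by
      simpa [Real.norm_eq_abs] using norm_le_pi_norm ((F w Nbr b)^[t] x₀ - x) i1
    have h2 : ((F w Nbr b)^[t] x₀ - x) i1 = ((F w Nbr b)^[t] x₀) i1 - a := by
      simp [haa]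
    have h3 : ε < ((F w Nbr b)^[t] x₀) i1 - a := by
      rw [hε]
      have : a' - a = (1-a)/2 := by rw [ha']; ring
      linarith
    calc ε < ((F w Nbr b)^[t] x₀) i1 - a := h3
      _ ≤ |((F w Nbr b)^[t] x₀ - x) i1| := by rw [h2]; exact le_abs_self _
      _ ≤ _ := h1
  linarith

set_option maxHeartbeats 2000000 in
theorem stmt19 {N k : ℕ} (hk : 2 ≤ k) (hkN : k ≤ N)
    (c : Fin N) (hc : c.val = 0)
    (Nbr : Fin N → Finset (Fin N))
    (hNbrC : Nbr c = Finset.univ.erase c) (hNbrL : ∀ i, i ≠ c → Nbr i = {c})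
    (w : Fin N → Fin N → ℝ) (hw : ∀ i j, i ≠ j → w i j = 1) (hwii : ∀ i, 0 ≤ w i i)
    (b : Fin N → ℝ) (hb : ∀ i, b i = 1)
    (x : Fin N → ℝ) (hxc : x c = 1/2)
    (hmid : ∀ i : Fin N, i ≠ c → i.val < k → x i ∈ Set.Ioo (0 : ℝ) 1)
    (hext : ∀ i : Fin N, k ≤ i.val → x i = 0 ∨ x i = 1)
    (hsum : ∑ i ∈ Finset.univ.erase c, x i = ((N : ℝ) - 1) / 2) :
    let Pk : Matrix (Fin k) (Fin k) ℝ := fun i j =>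
      if i = j then 1
      else if i.val = 0 then 1 / (2 * w c c + (N : ℝ) - 1)
      else if j.val = 0 then
        4 * x (Fin.castLE hkN i) * (1 - x (Fin.castLE hkN i)) /
          (2 * w (Fin.castLE hkN i) (Fin.castLE hkN i) + 1)
      else 0
    (∀ i j, 0 ≤ Pk i j) ∧
    (∀ i j : Fin k, fderiv ℝ (fun y => F w Nbr b y (Fin.castLE hkN i)) x
        (Pi.single (Fin.castLE hkN j) 1) = Pk i j) ∧
    1 < specRad Pk ∧
    ¬ LyapStable (F w Nbr b) x := by
  intro Pk
  have hPkdef : ∀ i j : Fin k, Pk i j = (if i = j then 1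
      else if i.val = 0 then 1 / (2 * w c c + (N : ℝ) - 1)
      else if j.val = 0 then
        4 * x (Fin.castLE hkN i) * (1 - x (Fin.castLE hkN i)) /
          (2 * w (Fin.castLE hkN i) (Fin.castLE hkN i) + 1)
      else 0) := fun i j => rfl
  have hN2 : 2 ≤ N := le_trans hk hkN
  have hNr : (2:ℝ) ≤ (N:ℝ) := by exact_mod_cast hN2
  have hwc := hwii c
  have hαden : (0:ℝ) < 2 * w c c + (N:ℝ) - 1 := by linarith
  have hD0 : ((Finset.univ.erase c).card : ℝ) = (N:ℝ) - 1 := by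
    rw [Finset.card_erase_of_mem (Finset.mem_univ c)]
    simp
    push_cast [Nat.cast_sub (by omega : 1 ≤ N)]
    ring
  -- facts about indices
  have hval0 : ∀ i : Fin k, i.val = 0 → Fin.castLE hkN i = c := by
    intro i hi
    apply Fin.ext
    simp [hi, hc]
  have hvalne : ∀ i : Fin k, i.val ≠ 0 → Fin.castLE hkN i ≠ c := by
    intro i hi hcon
    apply hi
    have := congrArg Fin.val hcon
    simpa [hc] using this
  have hmem : ∀ i : Fin k, i.val ≠ 0 → x (Fin.castLE hkN i) ∈ Set.Ioo (0:ℝ) 1 := by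
    intro i hi
    exact hmid _ (hvalne i hi) (by simpa using i.isLt)
  refine ⟨?_, ?_, ?_, ?_⟩
  · -- nonnegativity
    intro i j
    rw [hPkdef]
    by_cases h1 : i = j
    · rw [if_pos h1]; norm_num
    · rw [if_neg h1]
      by_cases h2 : i.val = 0
      · rw [if_pos h2]
        positivity
      · rw [if_neg h2]
        by_cases h3 : j.val = 0
        · rw [if_pos h3]
          have hm := hmem i h2
          have hwi := hwii (Fin.castLE hkN i)
          apply div_nonneg
          · nlinarith [hm.1, hm.2]
          · linarith
        · rw [if_neg h3]
  · -- Jacobian entries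
    intro i j
    by_cases h2 : i.val = 0
    · rw [hval0 i h2]
      have heq : (fun y => F w Nbr b y c) = (fun y : Fin N → ℝ =>
          (w c c * y c + y c * ∑ j ∈ Finset.univ.erase c, y j) /
            (w c c + y c * ∑ j ∈ Finset.univ.erase c, y j +
              (1 - y c) * (((N:ℝ)-1) - ∑ j ∈ Finset.univ.erase c, y j))) :=
        funext fun y => aux_F_center w Nbr b c hNbrC
          (fun j hj => hw c j (fun e => hj e.symm)) (hb c) ((N:ℝ)-1) hD0 y
      rw [heq, aux_center_fderiv (w c c) ((N:ℝ)-1) c x hxc (by rw [hsum]) hwc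
        (by linarith) (Fin.castLE hkN j)]
      by_cases h3 : j = i
      · rw [if_pos (by rw [h3]; exact hval0 i h2), hPkdef, if_pos h3.symm]
      · have hj0 : j.val ≠ 0 := by
          intro hcon
          exact h3 (Fin.ext (by rw [hcon, h2]))
        rw [if_neg (hvalne j hj0), hPkdef, if_neg (fun e => h3 e.symm), if_pos h2]
        ring_nf
    · have hne := hvalne i h2
      have heq : (fun y => F w Nbr b y (Fin.castLE hkN i)) = (fun y : Fin N → ℝ =>
          (w (Fin.castLE hkN i) (Fin.castLE hkN i) * y (Fin.castLE hkN i) +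
            y (Fin.castLE hkN i) * y c) /
            (w (Fin.castLE hkN i) (Fin.castLE hkN i) +
              y (Fin.castLE hkN i) * y c +
              (1 - y (Fin.castLE hkN i)) * (1 - y c))) :=
        funext fun y => aux_F_leaf w Nbr b c (Fin.castLE hkN i) (hNbrL _ hne)
          (hw _ c hne) (hb _) y
      rw [heq, aux_leaf_fderiv (w (Fin.castLE hkN i) (Fin.castLE hkN i))
        (x (Fin.castLE hkN i)) (Fin.castLE hkN i) c hne x hxc rfl (hwii _)
        (Fin.castLE hkN j)]
      by_cases h3 : j = i
      · rw [if_pos (by rw [h3]), hPkdef, if_pos h3.symm]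
      · have hcast_ne : Fin.castLE hkN j ≠ Fin.castLE hkN i := by
          intro hcon
          apply h3
          apply Fin.ext
          have := congrArg Fin.val hcon
          simpa using this
        rw [if_neg hcast_ne]
        by_cases h4 : j.val = 0
        · rw [if_pos (hval0 j h4), hPkdef,
            if_neg (fun e => h3 e.symm), if_neg h2, if_pos h4]
        · rw [if_neg (hvalne j h4), hPkdef,
            if_neg (fun e => h3 e.symm), if_neg h2, if_neg h4]
  · -- spectral radius
    have hk0 : 0 < k := by omega
    have hk1 : 1 < k := by omega
    set z0 : Fin k := ⟨0, hk0⟩ with hz0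
    set z1 : Fin k := ⟨1, hk1⟩ with hz1
    set α : ℝ := 1 / (2 * w c c + (N:ℝ) - 1) with hα
    have hαpos : 0 < α := by rw [hα]; positivity
    set β : Fin k → ℝ := fun i =>
      4 * x (Fin.castLE hkN i) * (1 - x (Fin.castLE hkN i)) /
        (2 * w (Fin.castLE hkN i) (Fin.castLE hkN i) + 1) with hβ
    have hβpos : ∀ i : Fin k, i ≠ z0 → 0 < β i := by
      intro i hi
      have hi0 : i.val ≠ 0 := by
        intro hcon
        exact hi (Fin.ext hcon)
      have hm := hmem i hi0
      have hwi := hwii (Fin.castLE hkN i)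
      rw [hβ]
      have h1 : 0 < 4 * x (Fin.castLE hkN i) * (1 - x (Fin.castLE hkN i)) := by
        nlinarith [hm.1, hm.2]
      positivity
    set B : ℝ := ∑ i ∈ Finset.univ.erase z0, β i with hB
    have hBpos : 0 < B := by
      rw [hB]
      apply Finset.sum_pos
      · intro i hi
        exact hβpos i (Finset.mem_erase.1 hi).1
      · exact ⟨z1, Finset.mem_erase.2 ⟨by simp [hz0, hz1, Fin.ext_iff], Finset.mem_univ _⟩⟩
    set t : ℝ := Real.sqrt (α * B) with htdef
    have htpos : 0 < t := Real.sqrt_pos.2 (by positivity)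
    have ht2 : t^2 = α * B := Real.sq_sqrt (by positivity)
    set μ : ℂ := ((1 + t : ℝ) : ℂ) with hμdef
    have hμ : 1 < ‖μ‖ := by
      rw [hμdef, Complex.norm_real, Real.norm_eq_abs, abs_of_pos (by linarith)]
      linarith
    set v : Fin k → ℂ := fun i => if i = z0 then (t:ℂ) else ((β i : ℝ) : ℂ) with hv
    have hvne : v ≠ 0 := by
      intro hcon
      have := congrFun hcon z0
      rw [hv] at this
      simp at this
      exact (ne_of_gt htpos) (by exact_mod_cast this)
    have hz0ne : ∀ i : Fin k, i ≠ z0 → i.val ≠ 0 := by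
      intro i hi hcon
      exact hi (Fin.ext hcon)
    have hPkz0 : ∀ j : Fin k, j ≠ z0 → Pk z0 j = α := by
      intro j hj
      rw [hPkdef, if_neg (fun e => hj e.symm), if_pos rfl, hα]
    have hPkdiag : ∀ i : Fin k, Pk i i = 1 := by
      intro i
      rw [hPkdef, if_pos rfl]
    have hPkcol : ∀ i : Fin k, i ≠ z0 → Pk i z0 = β i := by
      intro i hi
      rw [hPkdef, if_neg hi, if_neg (hz0ne i hi), if_pos rfl, hβ]
    have hPkzero : ∀ i j : Fin k, i ≠ z0 → j ≠ z0 → i ≠ j → Pk i j = 0 := by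
      intro i j hi hj hij
      rw [hPkdef, if_neg hij, if_neg (hz0ne i hi), if_neg (hz0ne j hj)]
    have heig : (Pk.map (fun a => (a : ℂ))).mulVec v = μ • v := by
      funext i
      rw [Matrix.mulVec, dotProduct]
      simp only [Matrix.map_apply]
      rw [← Finset.add_sum_erase _ (fun j => ((Pk i j : ℂ)) * v j) (Finset.mem_univ z0)]
      by_cases hiz : i = z0
      · subst hiz
        have hsum1 : ∑ j ∈ Finset.univ.erase z0, ((Pk z0 j : ℂ)) * v j
            = ((α * B : ℝ) : ℂ) := by
          rw [hB]
          push_cast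
          rw [Finset.mul_sum]
          refine Finset.sum_congr rfl fun j hj => ?_
          have hjz := (Finset.mem_erase.1 hj).1
          rw [hPkz0 j hjz, hv]
          simp [if_neg hjz]
        rw [hsum1, hPkdiag]
        rw [hv]
        simp only [Pi.smul_apply, if_pos rfl, smul_eq_mul]
        rw [hμdef]
        push_cast
        rw [show ((1:ℂ) + (t:ℂ)) * (t:ℂ) = (t:ℂ) + (t:ℂ)^2 by ring]
        rw [one_mul]
        congr 1
        exact_mod_cast congrArg (fun r : ℝ => (r : ℂ)) ht2.symm
      · have hsum2 : ∑ j ∈ Finset.univ.erase z0, ((Pk i j : ℂ)) * v j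
            = ((β i : ℝ) : ℂ) := by
          rw [Finset.sum_eq_single i]
          · rw [hPkdiag, hv]
            simp [if_neg hiz]
          · intro j hj hji
            have hjz := (Finset.mem_erase.1 hj).1
            rw [hPkzero i j hiz hjz (fun e => hji e.symm)]
            simp
          · intro hcon
            exact absurd (Finset.mem_erase.2 ⟨hiz, Finset.mem_univ _⟩) hcon
        rw [hsum2, hPkcol i hiz, hv]
        simp only [Pi.smul_apply, if_pos rfl, if_neg hiz, smul_eq_mul]
        rw [hμdef]
        push_cast
        ring
    exact aux_one_lt_specRad Pk μ v hvne heig hμ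
  · exact aux_unstable hk hkN c hc Nbr hNbrC hNbrL w hw hwii b hb x hxc hmid hext hsum
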